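/- (Convexity of the lifted constraint set of the ProBF program.) Let m be a natural number, let Σ ∈ ℝ^{m×m} be symmetric, σ_ab ∈ ℝ^m, σ_b² ∈ ℝ, and assume the (m+1)×(m+1) block matrix M = [[Σ, σ_ab],[σ_abᵀ, σ_b²]] is positive semidefinite. Define Q(u) = uᵀΣu + 2σ_abᵀu + σ_b². Let a ∈ ℝ^m, b ∈ ℝ, and δ ≥ 0. Then the set C = {(u, s) ∈ ℝ^m × ℝ : Q(u) ≤ s², 0 ≤ s, δ·s ≤ aᵀu + b} is a convex subset of ℝ^m × ℝ. -/

import Mathlib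

open Matrix

/-- Symmetry of the bilinear form of a symmetric matrix. -/
lemma probf_aux_symm {n : Type*} [Fintype n] (N : Matrix n n ℝ) (hN : N.IsSymm)
    (x y : n → ℝ) : x ⬝ᵥ N *ᵥ y = y ⬝ᵥ N *ᵥ x := by
  rw [dotProduct_mulVec, ← mulVec_transpose, hN.eq, dotProduct_comm]

/-- Expansion of a symmetric quadratic form at a linear combination. -/
lemma probf_aux_expand {n : Type*} [Fintype n] (N : Matrix n n ℝ) (hN : N.IsSymm)
    (x y : n → ℝ) (θ η : ℝ) :
    (θ • x + η • y) ⬝ᵥ N *ᵥ (θ • x + η • y)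
      = θ^2 * (x ⬝ᵥ N *ᵥ x) + 2*θ*η * (x ⬝ᵥ N *ᵥ y) + η^2 * (y ⬝ᵥ N *ᵥ y) := by
  have := probf_aux_symm N hN y x
  simp [mulVec_add, mulVec_smul, dotProduct_add, add_dotProduct, smul_dotProduct,
    dotProduct_smul, smul_eq_mul, this]
  ring

/-- Cauchy–Schwarz for a PSD quadratic form. -/
lemma probf_aux_cs {n : Type*} [Fintype n] (N : Matrix n n ℝ) (hN : N.PosSemidef)
    (x y : n → ℝ) :
    (x ⬝ᵥ N *ᵥ y)^2 ≤ (x ⬝ᵥ N *ᵥ x) * (y ⬝ᵥ N *ᵥ y) := by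
  have hsymm : N.IsSymm := hN.1
  have h : ∀ t : ℝ, 0 ≤ (y ⬝ᵥ N *ᵥ y) * (t*t) + (2 * (x ⬝ᵥ N *ᵥ y)) * t + (x ⬝ᵥ N *ᵥ x) := by
    intro t
    have h0 := hN.dotProduct_mulVec_nonneg (x + t • y)
    simp only [star_trivial] at h0
    have hexp := probf_aux_expand N hsymm x y 1 t
    simp only [one_smul] at hexp
    rw [hexp] at h0
    nlinarith [h0]
  have := discrim_le_zero h
  rw [discrim] at this
  nlinarith [this]

/-- **Convexity of the lifted constraint set of the ProBF program.**
The set `C = {(u, s) | Q u ≤ s², 0 ≤ s, δ s ≤ aᵀu + b}` is convex. -/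
theorem probf_lifted_set_convex
    (m : ℕ) (Sig : Matrix (Fin m) (Fin m) ℝ) (hSig : Sig.IsSymm)
    (σab : Fin m → ℝ) (σb2 : ℝ)
    (hM : (Matrix.fromBlocks Sig (Matrix.replicateCol (Fin 1) σab)
        (Matrix.replicateRow (Fin 1) σab) (Matrix.of fun _ _ => σb2)).PosSemidef)
    (a : Fin m → ℝ) (b : ℝ) (δ : ℝ) (hδ : 0 ≤ δ) :
    Convex ℝ {p : (Fin m → ℝ) × ℝ |
      p.1 ⬝ᵥ Sig *ᵥ p.1 + 2 * (σab ⬝ᵥ p.1) + σb2 ≤ p.2 ^ 2 ∧ 0 ≤ p.2 ∧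
        δ * p.2 ≤ a ⬝ᵥ p.1 + b} := by
  set M := Matrix.fromBlocks Sig (Matrix.replicateCol (Fin 1) σab)
      (Matrix.replicateRow (Fin 1) σab) (Matrix.of fun _ _ => σb2) with hMdef
  have hMsymm : M.IsSymm := hM.1
  set X : (Fin m → ℝ) → (Fin m ⊕ Fin 1 → ℝ) := fun u => Sum.elim u (fun _ => (1:ℝ)) with hX
  have hform : ∀ u : Fin m → ℝ,
      (X u) ⬝ᵥ M *ᵥ (X u) = u ⬝ᵥ Sig *ᵥ u + 2 * (σab ⬝ᵥ u) + σb2 := by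
    intro u
    show (Sum.elim u (fun _ => (1:ℝ))) ⬝ᵥ M *ᵥ (Sum.elim u (fun _ => (1:ℝ))) = _
    rw [hMdef, fromBlocks_mulVec, sumElim_dotProduct_sumElim]
    simp [Matrix.mulVec, dotProduct, Matrix.replicateCol, Matrix.replicateRow, Fin.sum_univ_one,
      Finset.sum_add_distrib, mul_add, mul_comm]
    ring
  rintro ⟨u₁, s₁⟩ ⟨h1q, h1s, h1l⟩ ⟨u₂, s₂⟩ ⟨h2q, h2s, h2l⟩ θ η hθ hη hθη
  dsimp only at h1q h1s h1l h2q h2s h2l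
  have hXcomb : Sum.elim (θ • u₁ + η • u₂) (fun _ => (1:ℝ)) = θ • X u₁ + η • X u₂ := by
    funext i
    cases i with
    | inl i => simp [hX]
    | inr i => simp [hX]; linarith
  refine ⟨?_, ?_, ?_⟩
  · show (θ • u₁ + η • u₂) ⬝ᵥ Sig *ᵥ (θ • u₁ + η • u₂) + 2 * (σab ⬝ᵥ (θ • u₁ + η • u₂)) + σb2
      ≤ (θ * s₁ + η * s₂)^2
    have e : (θ • u₁ + η • u₂) ⬝ᵥ Sig *ᵥ (θ • u₁ + η • u₂) + 2 * (σab ⬝ᵥ (θ • u₁ + η • u₂)) + σb2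
        = (θ • X u₁ + η • X u₂) ⬝ᵥ M *ᵥ (θ • X u₁ + η • X u₂) := by
      rw [← hXcomb, hform (θ • u₁ + η • u₂)]
    rw [e, probf_aux_expand M hMsymm]
    have hq1 : (X u₁) ⬝ᵥ M *ᵥ (X u₁) ≤ s₁^2 := by rw [hform u₁]; exact h1q
    have hq2 : (X u₂) ⬝ᵥ M *ᵥ (X u₂) ≤ s₂^2 := by rw [hform u₂]; exact h2q
    have hq1n : 0 ≤ (X u₁) ⬝ᵥ M *ᵥ (X u₁) := by
      have := hM.dotProduct_mulVec_nonneg (X u₁); simpa using this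
    have hq2n : 0 ≤ (X u₂) ⬝ᵥ M *ᵥ (X u₂) := by
      have := hM.dotProduct_mulVec_nonneg (X u₂); simpa using this
    have hcs := probf_aux_cs M hM (X u₁) (X u₂)
    set q₁ := (X u₁) ⬝ᵥ M *ᵥ (X u₁)
    set q₂ := (X u₂) ⬝ᵥ M *ᵥ (X u₂)
    set c := (X u₁) ⬝ᵥ M *ᵥ (X u₂)
    have hss : 0 ≤ s₁ * s₂ := mul_nonneg h1s h2s
    have hq12 : q₁ * q₂ ≤ s₁^2 * s₂^2 :=
      mul_le_mul hq1 hq2 hq2n (sq_nonneg s₁)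
    have hc : c ≤ s₁ * s₂ := by nlinarith [sq_nonneg (c - s₁*s₂), sq_nonneg (c + s₁*s₂)]
    nlinarith [hc, hq1, hq2, sq_nonneg θ, sq_nonneg η, mul_nonneg hθ hη]
  · show 0 ≤ θ * s₁ + η * s₂
    positivity
  · show δ * (θ * s₁ + η * s₂) ≤ a ⬝ᵥ (θ • u₁ + η • u₂) + b
    rw [dotProduct_add, dotProduct_smul, dotProduct_smul]
    have H1 := mul_le_mul_of_nonneg_left h1l hθ
    have H2 := mul_le_mul_of_nonneg_left h2l hη
    simp only [smul_eq_mul]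
    have hb : θ*b + η*b = b := by linear_combination b * hθη
    linarith [H1, H2, hb]
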